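/- Let S be a numerical semigroup of depth q ≥ 4 with |L| ≤ 12, where L = S ∩ [0,c). Let A_i be the Apéry pieces with cardinalities α_i. Then α_1 ≤ 2. -/
import Mathlib


theorem stmt16 (S : Set ℕ)
    (h0 : 0 ∈ S)
    (hadd : ∀ a ∈ S, ∀ b ∈ S, a + b ∈ S)
    (hfin : (Sᶜ : Set ℕ).Finite)
    (m : ℕ) (hm : m ∈ S ∧ m ≠ 0 ∧ ∀ x ∈ S, x ≠ 0 → m ≤ x)
    (c : ℕ) (hc : (∀ x, c ≤ x → x ∈ S) ∧ ∀ c', (∀ x, c' ≤ x → x ∈ S) → c ≤ c')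
    (q ρ : ℕ) (hq : q = (c + m - 1) / m) (hρ : ρ = q * m - c)
    (L : Set ℕ) (hL : L = {x ∈ S | x < c})
    (A : Set ℕ) (hA : A = {x ∈ S | ¬ ∃ s ∈ S, x = m + s})
    (Ai : ℕ → Set ℕ)
    (hAi : ∀ i, Ai i = {x ∈ A | i * m ≤ x + ρ ∧ x + ρ < (i + 1) * m})
    (hq4 : 4 ≤ q) (hL12 : L.ncard ≤ 12) :
    (Ai 1).ncard ≤ 2 := by
  obtain ⟨hmS, hm0, hmmin⟩ := hm
  have hmpos : 0 < m := Nat.pos_of_ne_zero hm0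
  -- basic facts about q*m
  have hdm := Nat.div_add_mod (c + m - 1) m
  have hmod : (c + m - 1) % m < m := Nat.mod_lt _ hmpos
  have hqm2 : q * m ≤ c + m - 1 := by rw [hq]; exact Nat.div_mul_le_self _ _
  have hqm1 : c ≤ q * m := by
    rw [hq, mul_comm]; omega
  have h4m : 4 * m ≤ q * m := Nat.mul_le_mul_right m hq4
  have hcb : 4 * m ≤ c + ρ := by omega
  have hρm : ρ < m := by omega
  -- facts about elements of Ai 1
  have key : ∀ x ∈ Ai 1, x ∈ S ∧ m < x ∧ x + ρ < 2 * m := by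
    intro x hx
    rw [hAi 1] at hx
    obtain ⟨hxA, hx1, hx2⟩ := hx
    rw [hA] at hxA
    obtain ⟨hxS, hxna⟩ := hxA
    have hx0 : x ≠ 0 := by rintro rfl; omega
    have hxm : m ≤ x := hmmin x hxS hx0
    have hxne : x ≠ m := by
      rintro rfl
      exact hxna ⟨0, h0, by omega⟩
    refine ⟨hxS, by omega, by omega⟩
  -- finiteness
  have hAifin : (Ai 1).Finite := by
    apply (Set.finite_Iio (2 * m)).subset
    intro x hx
    have := (key x hx).2.2
    simp only [Set.mem_Iio]; omega
  have hLfin : L.Finite := by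
    apply (Set.finite_Iio c).subset
    intro x hx
    rw [hL] at hx
    exact hx.2
  by_contra hcon
  push_neg at hcon
  rw [Set.ncard_eq_toFinset_card _ hAifin] at hcon
  set t := hAifin.toFinset with ht
  have htmem : ∀ x, x ∈ t → x ∈ Ai 1 := by
    intro x hx; rwa [ht, Set.Finite.mem_toFinset] at hx
  obtain ⟨a, haT⟩ := Finset.card_pos.mp (show 0 < t.card by omega)
  have h2 : 0 < (t.erase a).card := by
    rw [Finset.card_erase_of_mem haT]; omega
  obtain ⟨b, hbT⟩ := Finset.card_pos.mp h2
  have h3 : 0 < ((t.erase a).erase b).card := by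
    rw [Finset.card_erase_of_mem hbT, Finset.card_erase_of_mem haT]; omega
  obtain ⟨d, hdT⟩ := Finset.card_pos.mp h3
  have hba : b ≠ a := (Finset.mem_erase.mp hbT).1
  have hdb : d ≠ b := (Finset.mem_erase.mp hdT).1
  have hda : d ≠ a := (Finset.mem_erase.mp ((Finset.mem_erase.mp hdT).2)).1
  obtain ⟨haS, ham, ha2⟩ := key a (htmem a haT)
  obtain ⟨hbS, hbm, hb2⟩ := key b (htmem b (Finset.mem_of_mem_erase hbT))
  obtain ⟨hdS, hdm', hd2⟩ := key d
    (htmem d (Finset.mem_of_mem_erase (Finset.mem_of_mem_erase hdT)))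
  -- the 13 witness elements
  have hS' : ∀ x ∈ S, m + x ∈ S := fun x hx => hadd m hmS x hx
  set T : Finset ℕ := {0, m, m + m, m + (m + m), a, b, d, m + a, m + b, m + d,
    m + (m + a), m + (m + b), m + (m + d)} with hT
  have hTcard : T.card = 13 := by
    rw [hT]
    rw [Finset.card_insert_of_notMem (by simp; omega)]
    rw [Finset.card_insert_of_notMem (by simp; omega)]
    rw [Finset.card_insert_of_notMem (by simp; omega)]
    rw [Finset.card_insert_of_notMem (by simp; omega)]
    rw [Finset.card_insert_of_notMem (by simp; omega)]
    rw [Finset.card_insert_of_notMem (by simp; omega)]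
    rw [Finset.card_insert_of_notMem (by simp; omega)]
    rw [Finset.card_insert_of_notMem (by simp; omega)]
    rw [Finset.card_insert_of_notMem (by simp; omega)]
    rw [Finset.card_insert_of_notMem (by simp; omega)]
    rw [Finset.card_insert_of_notMem (by simp; omega)]
    rw [Finset.card_insert_of_notMem (by simp; omega)]
    rfl
  have hsub : ↑T ⊆ L := by
    intro x hx
    rw [hL]
    simp only [hT, Finset.coe_insert, Set.mem_insert_iff, Finset.coe_singleton,
      Set.mem_singleton_iff] at hx
    rcases hx with rfl | rfl | rfl | rfl | rfl | rfl | rfl | rfl | rfl | rfl | rfl | rfl | rfl <;>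
      refine ⟨?_, by omega⟩ <;>
      first
        | exact h0
        | exact hmS
        | exact haS
        | exact hbS
        | exact hdS
        | exact hS' _ hmS
        | exact hS' _ haS
        | exact hS' _ hbS
        | exact hS' _ hdS
        | exact hS' _ (hS' _ hmS)
        | exact hS' _ (hS' _ haS)
        | exact hS' _ (hS' _ hbS)
        | exact hS' _ (hS' _ hdS)
  have := Set.ncard_le_ncard hsub hLfin
  rw [Set.ncard_coe_finset, hTcard] at this
  omega
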